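/- Let σ be an involution on a finite-dimensional Hilbert space and |ψ⟩ a unit vector. With RBM parameters W = (1/2)arccos(e^{-2|κ|}), b = sign(κ)W, the post-selection success probability P_s = ⟨ψ|cos²(Wσ + bI)|ψ⟩ equals 1 - (1 - e^{-4|κ|})α, where α = ⟨ψ|P_s^{(+)}|ψ⟩ with P_s^{(+)} = (I + sign(κ)σ)/2 the projector onto the sign(κ)-eigenspace of σ. -/
import Mathlib


open Matrix

/-- RBM weight `W(κ) = (1/2) arccos(e^{-2|κ|})`. -/
noncomputable def Wparam (κ : ℝ) : ℝ := Real.arccos (Real.exp (-2 * |κ|)) / 2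

/-- RBM bias `b(κ) = sign(κ) W(κ)`. -/
noncomputable def bparam (κ : ℝ) : ℝ := Real.sign κ * Wparam κ

/-- `cos(Wσ + bI)` for an involution `σ`, via functional calculus:
since `σ² = I`, `f(Wσ+bI) = ((f(b+W)+f(b-W))/2) I + ((f(b+W)-f(b-W))/2) σ`. -/
noncomputable def opCos {d : ℕ} (W b : ℝ) (σ : Matrix (Fin d) (Fin d) ℂ) :
    Matrix (Fin d) (Fin d) ℂ :=
  (((Real.cos (b + W) + Real.cos (b - W)) / 2 : ℝ) : ℂ) • (1 : Matrix (Fin d) (Fin d) ℂ) +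
    (((Real.cos (b + W) - Real.cos (b - W)) / 2 : ℝ) : ℂ) • σ

lemma sq_lin {d : ℕ} (a c : ℂ) (σ : Matrix (Fin d) (Fin d) ℂ) (hinv : σ * σ = 1) :
    (a • (1 : Matrix (Fin d) (Fin d) ℂ) + c • σ) * (a • 1 + c • σ)
      = (a^2 + c^2) • (1 : Matrix (Fin d) (Fin d) ℂ) + (2*a*c) • σ := by
  simp only [add_mul, mul_add, smul_mul_assoc, mul_smul_comm, smul_smul, hinv,
    one_mul, mul_one]
  module

lemma cos2W (κ : ℝ) : Real.cos (2 * Wparam κ) = Real.exp (-2 * |κ|) := by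
  have h1 : Real.exp (-2 * |κ|) ≤ 1 := Real.exp_le_one_iff.mpr (by nlinarith [abs_nonneg κ])
  have h2 : (-1 : ℝ) ≤ Real.exp (-2 * |κ|) :=
    le_trans (by norm_num) (Real.exp_nonneg (-2 * |κ|))
  rw [Wparam,
    show 2 * (Real.arccos (Real.exp (-2*|κ|)) / 2) = Real.arccos (Real.exp (-2*|κ|)) by ring]
  exact Real.cos_arccos h2 h1

/-- Success probability `P_s = ⟨ψ|cos²(Wσ+bI)|ψ⟩ = 1 - (1 - e^{-4|κ|}) α`
with `α = ⟨ψ|(I + sign(κ)σ)/2|ψ⟩`. -/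
theorem rbm_success_probability {d : ℕ} (κ : ℝ) (hκ : κ ≠ 0)
    (σ : Matrix (Fin d) (Fin d) ℂ) (hherm : σ.IsHermitian) (hinv : σ * σ = 1)
    (ψ : Fin d → ℂ) (hψ : star ψ ⬝ᵥ ψ = 1) :
    star ψ ⬝ᵥ ((opCos (Wparam κ) (bparam κ) σ * opCos (Wparam κ) (bparam κ) σ) *ᵥ ψ) =
      1 - ((1 - Real.exp (-4 * |κ|) : ℝ) : ℂ) *
        (star ψ ⬝ᵥ (((2 : ℂ)⁻¹ •
          ((1 : Matrix (Fin d) (Fin d) ℂ) + ((Real.sign κ : ℝ) : ℂ) • σ)) *ᵥ ψ)) := by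
  set e := Real.exp (-2 * |κ|) with he
  have hE : Real.exp (-4 * |κ|) = e ^ 2 := by
    rw [he, ← Real.exp_nat_mul]; norm_num; ring
  set s := Real.sign κ with hs
  have hs1 : s = 1 ∨ s = -1 := by
    rcases hκ.lt_or_gt with h | h
    · right; rw [hs, Real.sign_of_neg h]
    · left; rw [hs, Real.sign_of_pos h]
  have hcp : Real.cos (bparam κ + Wparam κ) = (1 + s)/2 * e + (1 - s)/2 := by
    rcases hs1 with h | h
    · rw [bparam, ← hs, h, one_mul, ← two_mul, cos2W κ, ← he]; ring
    · rw [bparam, ← hs, h, show -1 * Wparam κ + Wparam κ = 0 by ring, Real.cos_zero]; ring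
  have hcm : Real.cos (bparam κ - Wparam κ) = (1 - s)/2 * e + (1 + s)/2 := by
    rcases hs1 with h | h
    · rw [bparam, ← hs, h, show 1 * Wparam κ - Wparam κ = 0 by ring, Real.cos_zero]; ring
    · rw [bparam, ← hs, h, show -1 * Wparam κ - Wparam κ = -(2 * Wparam κ) by ring,
        Real.cos_neg, cos2W κ, ← he]; ring
  have hs2 : (s : ℂ)^2 = 1 := by
    rcases hs1 with h | h <;> rw [h] <;> norm_num
  rw [opCos, hcp, hcm, sq_lin _ _ _ hinv, hE]
  simp only [add_mulVec, smul_mulVec, one_mulVec, dotProduct_add, dotProduct_smul,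
    smul_eq_mul, hψ, mul_one]
  set x := star ψ ⬝ᵥ σ *ᵥ ψ with hx
  push_cast
  linear_combination (((e : ℂ) - 1)^2 / 4) * hs2
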